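/- arXiv:0810.1442 — 2 statements merged into one kernel-verified Lean document; each statement's English description precedes it below -/
import Mathlib

section
/- Let Q and Q′ be quivers, let r be a family of relations on the hom-sets of the free groupoid on Q and r′ a family of relations on the hom-sets of the free groupoid on Q′, and let π and π′ denote the corresponding quotient functors from the free groupoids to the quotient groupoids. Then every functor F from the quotient of the free groupoid on Q by r to the quotient of the free groupoid on Q′ by r′ lifts to a functor F̃ between the free groupoids such that F̃ followed by π′ equals π followed by F. (This is the content of the paper's Lemma 3.3.2 in the lowest-dimensional track-category case.) -/
open CategoryTheory

noncomputable instance quotientGroupoid {C : Type*} [Groupoid C] (r : HomRel C) :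
    Groupoid (CategoryTheory.Quotient r) :=
  Groupoid.ofIsIso fun f => by
    obtain ⟨g, rfl⟩ := (Quotient.functor r).map_surjective f
    infer_instance

/-- Every functor between quotients of free groupoids lifts to a functor between the
free groupoids, commuting with the quotient functors. -/
theorem functor_lift_of_quotient_free_groupoid
    {Q : Type*} [Quiver Q] {Q' : Type*} [Quiver Q']
    (r : HomRel (Quiver.FreeGroupoid Q)) (r' : HomRel (Quiver.FreeGroupoid Q'))
    (F : CategoryTheory.Quotient r ⥤ CategoryTheory.Quotient r') :
    ∃ F' : Quiver.FreeGroupoid Q ⥤ Quiver.FreeGroupoid Q',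
      F' ⋙ CategoryTheory.Quotient.functor r' = CategoryTheory.Quotient.functor r ⋙ F := by
  let π' := CategoryTheory.Quotient.functor r'
  let φ : Q ⥤q CategoryTheory.Quotient r' :=
    Quiver.FreeGroupoid.of Q ⋙q (CategoryTheory.Quotient.functor r ⋙ F).toPrefunctor
  have hsurj : ∀ {X Y : Q} (a : X ⟶ Y), ∃ g : (φ.obj X).as ⟶ (φ.obj Y).as,
      π'.map g = φ.map a := fun a => π'.map_surjective (φ.map a)
  let ψ : Q ⥤q Quiver.FreeGroupoid Q' :=
    { obj := fun X => (φ.obj X).as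
      map := fun a => (hsurj a).choose }
  refine ⟨Quiver.FreeGroupoid.lift ψ, ?_⟩
  rw [Quiver.FreeGroupoid.lift_unique φ (Quiver.FreeGroupoid.lift ψ ⋙ π') ?_,
    Quiver.FreeGroupoid.lift_unique φ (CategoryTheory.Quotient.functor r ⋙ F) rfl]
  · have : Quiver.FreeGroupoid.of Q ⋙q (Quiver.FreeGroupoid.lift ψ ⋙ π').toPrefunctor
        = (Quiver.FreeGroupoid.of Q ⋙q (Quiver.FreeGroupoid.lift ψ).toPrefunctor) ⋙q π'.toPrefunctor := rfl
    rw [this, Quiver.FreeGroupoid.lift_spec]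
    fapply Prefunctor.ext
    · intro X; rfl
    · intro X Y a
      exact (hsurj a).choose_spec
end

section
/- For every n ≥ 1, the symmetric group on Fin n is isomorphic to the group presented by generators g₁, …, g_{n−1} subject to the relations gᵢ² = 1 for all i, gᵢ gⱼ = gⱼ gᵢ whenever |i − j| ≥ 2, and gᵢ g_{i+1} gᵢ = g_{i+1} gᵢ g_{i+1} for all i, via the morphism sending gᵢ to the adjacent transposition tᵢ₋₁; that is, the induced homomorphism from this presented group to Equiv.Perm (Fin n) is a group isomorphism. -/
/-- The Coxeter-style relators for the symmetric group: squares of the generators,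
commutation of distant generators, and the braid (Yang-Baxter) relations. -/
def symmRels (m : ℕ) : Set (FreeGroup (Fin m)) :=
  {w | (∃ i : Fin m, w = (FreeGroup.of i) ^ 2) ∨
    (∃ i j : Fin m, 2 ≤ Nat.dist i.val j.val ∧
      w = FreeGroup.of i * FreeGroup.of j * (FreeGroup.of i)⁻¹ * (FreeGroup.of j)⁻¹) ∨
    (∃ i j : Fin m, j.val = i.val + 1 ∧
      w = FreeGroup.of i * FreeGroup.of j * FreeGroup.of i *
        (FreeGroup.of j * FreeGroup.of i * FreeGroup.of j)⁻¹)}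

set_option linter.unnecessarySimpa false

namespace SymmPres

variable {m : ℕ}

abbrev G (m : ℕ) := PresentedGroup (symmRels m)

lemma mk_rel {r : FreeGroup (Fin m)} (hr : r ∈ symmRels m) :
    PresentedGroup.mk (symmRels m) r = 1 :=
  (QuotientGroup.eq_one_iff _).mpr (Subgroup.subset_normalClosure hr)

lemma of_sq (i : Fin m) : (PresentedGroup.of i : G m) * PresentedGroup.of i = 1 := by
  have := mk_rel (m := m) (r := (FreeGroup.of i) ^ 2) (Or.inl ⟨i, rfl⟩)
  simpa [sq, PresentedGroup.of] using this

lemma of_comm {i j : Fin m} (h : 2 ≤ Nat.dist i.val j.val) :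
    (PresentedGroup.of i : G m) * PresentedGroup.of j
      = PresentedGroup.of j * PresentedGroup.of i := by
  have := mk_rel (m := m)
    (r := FreeGroup.of i * FreeGroup.of j * (FreeGroup.of i)⁻¹ * (FreeGroup.of j)⁻¹)
    (Or.inr (Or.inl ⟨i, j, h, rfl⟩))
  simp only [map_mul, map_inv] at this
  exact commutatorElement_eq_one_iff_mul_comm.mp this

lemma of_braid {i j : Fin m} (h : j.val = i.val + 1) :
    (PresentedGroup.of i : G m) * PresentedGroup.of j * PresentedGroup.of i
      = PresentedGroup.of j * PresentedGroup.of i * PresentedGroup.of j := by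
  have := mk_rel (m := m)
    (r := FreeGroup.of i * FreeGroup.of j * FreeGroup.of i *
        (FreeGroup.of j * FreeGroup.of i * FreeGroup.of j)⁻¹)
    (Or.inr (Or.inr ⟨i, j, h, rfl⟩))
  simp only [map_mul, map_inv] at this
  exact mul_inv_eq_one.mp this

/-- generator as a function of a natural number index, junk value 1. -/
noncomputable def ag (m i : ℕ) : G m :=
  if h : i < m then PresentedGroup.of ⟨i, h⟩ else 1

lemma ag_of {i : ℕ} (h : i < m) : ag m i = PresentedGroup.of ⟨i, h⟩ := dif_pos h

lemma ag_sq (i : ℕ) : ag m i * ag m i = 1 := by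
  unfold ag; split
  · exact of_sq _
  · simp

lemma ag_comm {i j : ℕ} (h : i + 2 ≤ j) : ag m i * ag m j = ag m j * ag m i := by
  unfold ag
  by_cases hj : j < m
  · by_cases hi : i < m
    · rw [dif_pos hi, dif_pos hj]
      exact of_comm (by simp only [Nat.dist]; omega)
    · rw [dif_neg hi]; simp
  · rw [dif_neg hj]; simp

lemma ag_braid {i : ℕ} (h : i + 1 < m) :
    ag m i * ag m (i + 1) * ag m i = ag m (i + 1) * ag m i * ag m (i + 1) := by
  rw [ag_of (by omega : i < m), ag_of h]
  exact of_braid rfl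

/-- the word g_{k+len-1} g_{k+len-2} ⋯ g_k -/
noncomputable def vg (m k : ℕ) : ℕ → G m
  | 0 => 1
  | len + 1 => ag m (k + len) * vg m k len

lemma vg_concat (k l1 l2 : ℕ) : vg m k (l1 + l2) = vg m (k + l1) l2 * vg m k l1 := by
  induction l2 with
  | zero => simp [vg]
  | succ n ih =>
      have : l1 + (n + 1) = (l1 + n) + 1 := rfl
      rw [this, vg, ih, vg, show k + (l1 + n) = k + l1 + n from by ring, mul_assoc]

lemma vg_succ (k len : ℕ) : vg m k (len + 1) = vg m (k + 1) len * ag m k := by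
  induction len with
  | zero => simp [vg]
  | succ n ih =>
      rw [vg, ih, vg, ← mul_assoc, show (k+1) + n = k + (n+1) from by ring]

/-- a low letter moves through the word -/
lemma vg_comm_low {i k : ℕ} (h : i + 2 ≤ k) (len : ℕ) :
    vg m k len * ag m i = ag m i * vg m k len := by
  induction len with
  | zero => simp [vg]
  | succ n ih =>
      rw [vg, mul_assoc, ih, ← mul_assoc, ← ag_comm (by omega), mul_assoc]

/-- a high letter moves through the word -/
lemma vg_comm_high {i k : ℕ} (len : ℕ) (h : k + len + 1 ≤ i) :
    vg m k len * ag m i = ag m i * vg m k len := by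
  induction len with
  | zero => simp [vg]
  | succ n ih =>
      rw [vg, mul_assoc, ih (by omega), ← mul_assoc, ag_comm (by omega), mul_assoc]

lemma vg_absorb (k len : ℕ) : vg m k (len + 1) * ag m k = vg m (k + 1) len := by
  rw [vg_succ, mul_assoc, ag_sq, mul_one]

lemma braid_move {A B V W : G m} (hbr : A * B * A = B * A * B)
    (hcV : V * A = A * V) (hWB : W * B = B * W) :
    (V * B) * (A * W) * B = A * ((V * B) * (A * W)) := by
  calc (V * B) * (A * W) * B
      = V * (B * A) * (W * B) := by group
    _ = V * (B * A) * (B * W) := by rw [hWB]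
    _ = V * (B * A * B) * W := by group
    _ = V * (A * B * A) * W := by rw [← hbr]
    _ = (V * A) * (B * A * W) := by group
    _ = (A * V) * (B * A * W) := by rw [hcV]
    _ = A * ((V * B) * (A * W)) := by group

lemma vg_braid {k l1 len : ℕ} (h1 : 1 ≤ l1) (h2 : l1 + 1 ≤ len) (hm : k + l1 < m) :
    vg m k len * ag m (k + l1) = ag m (k + l1 - 1) * vg m k len := by
  obtain ⟨l1', rfl⟩ : ∃ l1', l1 = l1' + 1 := ⟨l1 - 1, by omega⟩
  obtain ⟨l2, rfl⟩ : ∃ l2, len = (l1' + 1) + (l2 + 1) := ⟨len - l1' - 2, by omega⟩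
  have hbr : ag m (k + l1') * ag m (k + l1' + 1) * ag m (k + l1')
      = ag m (k + l1' + 1) * ag m (k + l1') * ag m (k + l1' + 1) :=
    ag_braid (by omega)
  have hcV : vg m (k + l1' + 2) l2 * ag m (k + l1') = ag m (k + l1') * vg m (k + l1' + 2) l2 :=
    vg_comm_low (by omega) l2
  have hWB : vg m k l1' * ag m (k + l1' + 1) = ag m (k + l1' + 1) * vg m k l1' :=
    vg_comm_high l1' (by omega)
  have e_up : vg m (k + l1' + 1) (l2 + 1) = vg m (k + l1' + 2) l2 * ag m (k + l1' + 1) :=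
    vg_succ _ _
  have e_low : vg m k (l1' + 1) = ag m (k + l1') * vg m k l1' := rfl
  have hsplit : vg m k ((l1' + 1) + (l2 + 1))
      = vg m (k + (l1' + 1)) (l2 + 1) * vg m k (l1' + 1) := vg_concat _ _ _
  rw [show k + (l1' + 1) = k + l1' + 1 from by ring] at hsplit ⊢
  rw [show k + l1' + 1 - 1 = k + l1' from by omega]
  rw [hsplit, e_up, e_low]
  exact braid_move hbr hcV hWB


/-- the target generators -/
def sgen (m : ℕ) (i : Fin m) : Equiv.Perm (Fin (m + 1)) := Equiv.swap i.castSucc i.succ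

lemma swap_comm_of_ne {α : Type*} [DecidableEq α] {a b c d : α}
    (h1 : a ≠ c) (h2 : a ≠ d) (h3 : b ≠ c) (h4 : b ≠ d) :
    Equiv.swap a b * Equiv.swap c d = Equiv.swap c d * Equiv.swap a b := by
  have key : Equiv.swap (Equiv.swap c d a) (Equiv.swap c d b)
      = Equiv.swap c d * Equiv.swap a b * (Equiv.swap c d)⁻¹ :=
    Equiv.swap_apply_apply _ _ _
  rw [Equiv.swap_apply_of_ne_of_ne h1 h2, Equiv.swap_apply_of_ne_of_ne h3 h4] at key
  calc Equiv.swap a b * Equiv.swap c d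
      = (Equiv.swap c d * Equiv.swap a b * (Equiv.swap c d)⁻¹) * Equiv.swap c d := by
        rw [← key]
    _ = Equiv.swap c d * Equiv.swap a b := by group

lemma swap_braid {α : Type*} [DecidableEq α] {x y z : α}
    (hxy : x ≠ y) (hxz : x ≠ z) (hyz : y ≠ z) :
    Equiv.swap x y * Equiv.swap y z * Equiv.swap x y
      = Equiv.swap y z * Equiv.swap x y * Equiv.swap y z := by
  have h1 : Equiv.swap x y * Equiv.swap y z * Equiv.swap x y
      = Equiv.swap (Equiv.swap x y y) (Equiv.swap x y z) := by
    rw [Equiv.swap_apply_apply, Equiv.swap_inv]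
  have h2 : Equiv.swap y z * Equiv.swap x y * Equiv.swap y z
      = Equiv.swap (Equiv.swap y z x) (Equiv.swap y z y) := by
    rw [Equiv.swap_apply_apply, Equiv.swap_inv]
  rw [h1, h2, Equiv.swap_apply_right, Equiv.swap_apply_of_ne_of_ne hxz.symm hyz.symm,
    Equiv.swap_apply_of_ne_of_ne hxy hxz, Equiv.swap_apply_left]

lemma sgen_rels (m : ℕ) : ∀ r ∈ symmRels m, FreeGroup.lift (sgen m) r = 1 := by
  rintro r (⟨i, rfl⟩ | ⟨i, j, hd, rfl⟩ | ⟨i, j, hs, rfl⟩)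
  · simp only [map_pow, FreeGroup.lift_apply_of, sq, sgen]
    exact Equiv.swap_mul_self _ _
  · simp only [map_mul, map_inv, FreeGroup.lift_apply_of, sgen]
    rw [← commutatorElement_def]
    refine commutatorElement_eq_one_iff_mul_comm.mpr (swap_comm_of_ne ?_ ?_ ?_ ?_) <;>
      · intro h
        have := congrArg Fin.val h
        simp only [Fin.coe_castSucc, Fin.val_succ, Nat.dist] at this hd
        omega
  · simp only [map_mul, map_inv, FreeGroup.lift_apply_of, sgen]
    rw [mul_inv_eq_one]
    have hy : j.castSucc = i.succ := by
      apply Fin.ext; simp [hs]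
    rw [hy]
    refine swap_braid ?_ ?_ ?_ <;>
      · intro h
        have := congrArg Fin.val h
        simp only [Fin.coe_castSucc, Fin.val_succ] at this
        omega

/-- the homomorphism to the symmetric group -/
def phi (m : ℕ) : G m →* Equiv.Perm (Fin (m + 1)) :=
  PresentedGroup.toGroup (sgen_rels m)

lemma phi_of (m : ℕ) (i : Fin m) :
    phi m (PresentedGroup.of i) = Equiv.swap i.castSucc i.succ :=
  PresentedGroup.toGroup.of (sgen_rels m)

lemma phi_surjective (m : ℕ) : Function.Surjective (phi m) := by
  intro x
  have hx : x ∈ Submonoid.closure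
      (Set.range fun i : Fin m ↦ Equiv.swap i.castSucc i.succ) := by
    rw [Equiv.Perm.mclosure_swap_castSucc_succ m]; trivial
  induction hx using Submonoid.closure_induction with
  | mem x hx => obtain ⟨i, rfl⟩ := hx; exact ⟨PresentedGroup.of i, phi_of m i⟩
  | one => exact ⟨1, map_one _⟩
  | mul a b _ _ ha hb =>
      obtain ⟨u, rfl⟩ := ha; obtain ⟨v, rfl⟩ := hb
      exact ⟨u * v, map_mul _ _ _⟩


lemma jmap_rels (m : ℕ) : ∀ r ∈ symmRels m,
    FreeGroup.lift (fun i : Fin m => (PresentedGroup.of i.castSucc : G (m + 1))) r = 1 := by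
  rintro r (⟨i, rfl⟩ | ⟨i, j, hd, rfl⟩ | ⟨i, j, hs, rfl⟩)
  · simp only [map_pow, FreeGroup.lift_apply_of, sq]
    exact of_sq _
  · simp only [map_mul, map_inv, FreeGroup.lift_apply_of]
    rw [← commutatorElement_def]
    exact commutatorElement_eq_one_iff_mul_comm.mpr (of_comm (by simpa using hd))
  · simp only [map_mul, map_inv, FreeGroup.lift_apply_of]
    rw [mul_inv_eq_one]
    exact of_braid (by simpa using hs)

/-- the inclusion of presented groups induced by `Fin.castSucc` -/
def jmap (m : ℕ) : G m →* G (m + 1) :=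
  PresentedGroup.toGroup (jmap_rels m)

lemma ag_mem_range {m i : ℕ} (h : i < m) : ag (m + 1) i ∈ (jmap m).range := by
  refine ⟨PresentedGroup.of ⟨i, h⟩, ?_⟩
  rw [jmap, PresentedGroup.toGroup.of, ag_of (by omega : i < m + 1)]
  rfl

lemma of_eq_ag {m : ℕ} (x : Fin m) : (PresentedGroup.of x : G m) = ag m x.val := by
  rw [ag_of x.isLt]

lemma step (m : ℕ) {h : G (m + 1)} (hh : h ∈ (jmap m).range) {k : ℕ} (hk : k ≤ m + 1)
    {i : ℕ} (hi : i ≤ m) :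
    ∃ h' ∈ (jmap m).range, ∃ k' ≤ m + 1,
      h * vg (m + 1) k (m + 1 - k) * ag (m + 1) i = h' * vg (m + 1) k' (m + 1 - k') := by
  rcases Nat.lt_or_ge (i + 1) k with hc | hc
  · -- i + 2 ≤ k : commute through
    have hcm := vg_comm_low (m := m + 1) (i := i) (k := k) (by omega) (m + 1 - k)
    refine ⟨h * ag (m + 1) i, mul_mem hh (ag_mem_range (by omega)), k, hk, ?_⟩
    rw [mul_assoc, hcm, ← mul_assoc]
  · rcases Nat.lt_or_ge i k with hc2 | hc2
    · -- i + 1 = k : extend the word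
      have hik : k = i + 1 := by omega
      subst hik
      refine ⟨h, hh, i, by omega, ?_⟩
      have hv := vg_succ (m := m + 1) i (m - i)
      rw [show m + 1 - i = (m - i) + 1 from by omega, hv,
        show m + 1 - (i + 1) = m - i from by omega, mul_assoc]
    · rcases Nat.eq_or_lt_of_le hc2 with hc3 | hc3
      · -- i = k : absorb
        obtain rfl : i = k := hc3.symm
        refine ⟨h, hh, i + 1, by omega, ?_⟩
        have hv := vg_absorb (m := m + 1) i (m - i)
        rw [show m + 1 - i = (m - i) + 1 from by omega, mul_assoc, hv,
          show m + 1 - (i + 1) = m - i from by omega]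
      · -- k < i : braid
        have hbr := vg_braid (m := m + 1) (k := k) (l1 := i - k) (len := m + 1 - k)
          (by omega) (by omega) (by omega)
        rw [show k + (i - k) = i from by omega, show i - 1 = i - 1 from rfl] at hbr
        refine ⟨h * ag (m + 1) (i - 1), mul_mem hh (ag_mem_range (by omega)), k, hk, ?_⟩
        rw [mul_assoc, hbr, ← mul_assoc]

lemma cover (m : ℕ) (g : G (m + 1)) :
    ∃ h ∈ (jmap m).range, ∃ k ≤ m + 1, g = h * vg (m + 1) k (m + 1 - k) := by
  have base : ∃ h ∈ (jmap m).range, ∃ k ≤ m + 1,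
      (1 : G (m + 1)) = h * vg (m + 1) k (m + 1 - k) := by
    refine ⟨1, one_mem _, m + 1, le_refl _, ?_⟩
    rw [show m + 1 - (m + 1) = 0 from by omega]
    simp [vg]
  obtain ⟨w, rfl⟩ := PresentedGroup.mk_surjective (symmRels (m + 1)) g
  suffices H : ∀ w : FreeGroup (Fin (m + 1)), ∀ g : G (m + 1),
      (∃ h ∈ (jmap m).range, ∃ k ≤ m + 1, g = h * vg (m + 1) k (m + 1 - k)) →
      ∃ h ∈ (jmap m).range, ∃ k ≤ m + 1,
        g * PresentedGroup.mk (symmRels (m + 1)) w = h * vg (m + 1) k (m + 1 - k) by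
    simpa using H w 1 base
  intro w
  induction w using FreeGroup.induction_on with
  | C1 => simpa using fun g hg => hg
  | of x =>
      rintro g ⟨h, hh, k, hk, rfl⟩
      have hx : (PresentedGroup.mk (symmRels (m + 1))) (FreeGroup.of x) = ag (m + 1) x.val := by
        rw [ag_of x.isLt]; rfl
      rw [hx]
      exact step m hh hk (Nat.lt_succ_iff.mp x.isLt)
  | inv_of x ih =>
      intro g hg
      have hinv : ((PresentedGroup.mk (symmRels (m + 1))) (FreeGroup.of x))⁻¹
          = (PresentedGroup.mk (symmRels (m + 1))) (FreeGroup.of x) :=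
        inv_eq_of_mul_eq_one_right (of_sq x)
      rw [map_inv, hinv]
      exact ih g hg
  | mul w1 w2 ih1 ih2 =>
      intro g hg
      rw [map_mul, ← mul_assoc]
      exact ih2 _ (ih1 g hg)


lemma phi_bijective : ∀ m : ℕ, Function.Bijective (phi m) := by
  intro m
  induction m with
  | zero =>
      constructor
      · intro a b _
        have key : ∀ x : G 0, x ∈ (⊥ : Subgroup (G 0)) := fun x =>
          PresentedGroup.generated_by _ ⊥ (fun j => j.elim0) x
        have ha := Subgroup.mem_bot.mp (key a)
        have hb := Subgroup.mem_bot.mp (key b)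
        rw [ha, hb]
      · exact phi_surjective 0
  | succ m IH =>
      have e : G m ≃ Equiv.Perm (Fin (m + 1)) := Equiv.ofBijective _ IH
      have hGm : Finite (G m) := Finite.of_equiv _ e.symm
      have hfinR : Finite ((jmap m).range) :=
        Finite.of_surjective _ (jmap m).rangeRestrict_surjective
      let F : (jmap m).range × Fin (m + 2) → G (m + 1) := fun p =>
        (p.1 : G (m + 1)) * vg (m + 1) p.2.val (m + 1 - p.2.val)
      have hF : Function.Surjective F := by
        intro g
        obtain ⟨h, hh, k, hk, rfl⟩ := cover m g
        exact ⟨(⟨h, hh⟩, ⟨k, by omega⟩), rfl⟩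
      have hfinG : Finite (G (m + 1)) := Finite.of_surjective F hF
      have h1 : Nat.card (G (m + 1)) ≤ Nat.card ((jmap m).range) * (m + 2) := by
        have := Nat.card_le_card_of_surjective F hF
        rwa [Nat.card_prod, Nat.card_eq_fintype_card (α := Fin (m + 2)),
          Fintype.card_fin] at this
      have h2 : Nat.card ((jmap m).range) ≤ Nat.card (G m) :=
        Nat.card_le_card_of_surjective _ (jmap m).rangeRestrict_surjective
      have h3 : Nat.card (G m) = Nat.factorial (m + 1) := by
        rw [Nat.card_congr e, Nat.card_eq_fintype_card, Fintype.card_perm, Fintype.card_fin]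
      have h4 : Nat.card (Equiv.Perm (Fin (m + 2))) = Nat.factorial (m + 2) := by
        rw [Nat.card_eq_fintype_card, Fintype.card_perm, Fintype.card_fin]
      have hle : Nat.card (G (m + 1)) ≤ Nat.card (Equiv.Perm (Fin (m + 2))) := by
        rw [h4]
        calc Nat.card (G (m + 1)) ≤ Nat.card ((jmap m).range) * (m + 2) := h1
          _ ≤ Nat.card (G m) * (m + 2) := Nat.mul_le_mul_right _ h2
          _ = Nat.factorial (m + 1) * (m + 2) := by rw [h3]
          _ = Nat.factorial (m + 2) := by
              rw [Nat.factorial_succ (m + 1)]; ring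
      exact (phi_surjective (m + 1)).bijective_of_nat_card_le hle

end SymmPres

/-- The group presented by generators `g₀, …, g_{m-1}` subject to `gᵢ² = 1`,
`gᵢgⱼ = gⱼgᵢ` for `|i - j| ≥ 2` and `gᵢg_{i+1}gᵢ = g_{i+1}gᵢg_{i+1}` is isomorphic to
the symmetric group on `Fin (m+1)`, via `gᵢ ↦ (i, i+1)`.  (Here `n = m + 1 ≥ 1`.) -/
theorem presentedGroup_symmetricGroup (m : ℕ) :
    ∃ φ : PresentedGroup (symmRels m) →* Equiv.Perm (Fin (m + 1)),
      (∀ i : Fin m, φ (PresentedGroup.of i) = Equiv.swap i.castSucc i.succ) ∧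
      Function.Bijective φ :=
  ⟨SymmPres.phi m, SymmPres.phi_of m, SymmPres.phi_bijective m⟩
end
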